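/- arXiv:0904.0874 — 2 statements merged into one kernel-verified Lean document; each statement's English description precedes it below -/
import Mathlib

section
/- Let h > 0 with βh ∈ 2ℕ. For all (x, σ, s), (y, τ, u) ∈ Γ × {↑,↓} × [0,β)_h, the covariance admits the Matsubara representation C(xσs, yτu) = (δ_{σ,τ}/(β L^d)) · ∑_{k ∈ Γ*} ∑_{ω ∈ M_h} e^{i⟨k, y−x⟩} e^{−iω(u−s)} / ( h·(1 − e^{−iω/h + E_k/h}) ). -/
open scoped Real BigOperators
open MeasureTheory

noncomputable section

/-- The dispersion relation `E_k`, with momentum `k = 2π m / L` parametrized by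
`m : Fin d → ZMod L`. -/
def disp (d L : ℕ) (t t' μ : ℝ) (k : Fin d → ZMod L) : ℝ :=
  -2 * t * (∑ j : Fin d, Real.cos (2 * Real.pi * ((k j).val : ℝ) / L))
    - 4 * t' * (if 2 ≤ d then (1 : ℝ) else 0) *
        (∑ j : Fin d, ∑ l : Fin d,
          if j < l then
            Real.cos (2 * Real.pi * ((k j).val : ℝ) / L) *
              Real.cos (2 * Real.pi * ((k l).val : ℝ) / L)
          else 0)
    - μ

/-- The inner product `⟨k, x⟩` of a momentum `k = 2π m / L` with a lattice site `x`. -/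
def phase (d L : ℕ) (k x : Fin d → ZMod L) : ℝ :=
  ∑ j : Fin d, (2 * Real.pi * ((k j).val : ℝ) / L) * ((x j).val : ℝ)

/-- The covariance `C(xσs, yτu)`.  Spins are represented by `Bool` (`true` = ↑). -/
def Cov (d L : ℕ) [NeZero L] (t t' μ β : ℝ)
    (x : Fin d → ZMod L) (σ : Bool) (s : ℝ)
    (y : Fin d → ZMod L) (τ : Bool) (u : ℝ) : ℂ :=
  ((if σ = τ then (1 : ℂ) else 0) / (L : ℂ) ^ d) *
    ∑ k : Fin d → ZMod L,
      Complex.exp (Complex.I * (phase d L k (y - x) : ℂ)) *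
        (Real.exp (-((u - s) * disp d L t t' μ k)) : ℂ) *
        ((if u - s ≤ 0 then 1 / (1 + Real.exp (β * disp d L t t' μ k))
            else -(1 / (1 + Real.exp (-(β * disp d L t t' μ k)))) : ℝ) : ℂ)

/-- Quadruples of lattice sites (elements of `Γ⁴`). -/
abbrev Quad (d L : ℕ) :=
  (Fin d → ZMod L) × (Fin d → ZMod L) × (Fin d → ZMod L) × (Fin d → ZMod L)

/-- The pair index `j ∈ {1,…,n}` to which the row/column index `i ∈ {1,…,2n}` belongs. -/
def halfIdx {n : ℕ} (i : Fin (2 * n)) : Fin n :=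
  ⟨i.val / 2, by have := i.isLt; omega⟩

/-- The `x`-coordinate attached to the row index `i`: `x_{2j-1}` resp. `x_{2j}`. -/
def rowx {d L n : ℕ} (X : Fin n → Quad d L) (i : Fin (2 * n)) : Fin d → ZMod L :=
  if i.val % 2 = 0 then (X (halfIdx i)).1 else (X (halfIdx i)).2.1

/-- The `y`-coordinate attached to the column index `i`: `y_{2j-1}` resp. `y_{2j}`. -/
def rowy {d L n : ℕ} (X : Fin n → Quad d L) (i : Fin (2 * n)) : Fin d → ZMod L :=
  if i.val % 2 = 0 then (X (halfIdx i)).2.2.1 else (X (halfIdx i)).2.2.2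

/-- The spin `σ_i` : `↑` (`true`) for odd `i` (1-indexed), `↓` for even `i`. -/
def rowspin {n : ℕ} (i : Fin (2 * n)) : Bool := decide (i.val % 2 = 0)

/-- `det( C(x_j σ_j s_j, y_k σ_k s_k) )_{1 ≤ j,k ≤ 2n}` with the constraint
`s_{2j} = s_{2j-1}` built in (`sv` gives one time per pair). -/
def detTerm (d L : ℕ) [NeZero L] (t t' μ β : ℝ) (n : ℕ)
    (X : Fin n → Quad d L) (sv : Fin n → ℝ) : ℂ :=
  Matrix.det (Matrix.of fun i j : Fin (2 * n) =>
    Cov d L t t' μ β (rowx X i) (rowspin i) (sv (halfIdx i))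
      (rowy X j) (rowspin j) (sv (halfIdx j)))

/-- The `n`-th term of the (continuum) perturbation series, with general complex
weights `w : Γ⁴ → ℂ` in place of `U_{x,y,z,w}`. -/
def coefTerm (d L : ℕ) [NeZero L] (t t' μ β : ℝ) (n : ℕ) (w : Quad d L → ℂ) : ℂ :=
  (1 / n.factorial : ℂ) *
    ∑ X : Fin n → Quad d L,
      (∏ j : Fin n, -w (X j)) *
        ∫ sv in (Set.univ.pi fun _ : Fin n => Set.Icc (0 : ℝ) β),
          detTerm d L t t' μ β n X sv

/-- The partition function series `P((U_X))`. -/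
def Pseries (d L : ℕ) [NeZero L] (t t' μ β : ℝ) (U : Quad d L → ℂ) : ℂ :=
  1 + ∑' n : ℕ, coefTerm d L t t' μ β (n + 1) U

/-- The `n`-th term of the discretized perturbation series with time mesh `1/h`
and `M = βh` points in `[0,β)`. -/
def coefTermD (d L : ℕ) [NeZero L] (t t' μ β h : ℝ) (M : ℕ) (n : ℕ)
    (w : Quad d L → ℂ) : ℂ :=
  (1 / n.factorial : ℂ) *
    ∑ X : Fin n → Quad d L, ∑ sv : Fin n → Fin M,
      (∏ j : Fin n, -(1 / (h : ℂ)) * w (X j)) *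
        detTerm d L t t' μ β n X fun j => (sv j : ℝ) / h

/-- The discretized partition function `P_h((U_X))`. -/
def PseriesD (d L : ℕ) [NeZero L] (t t' μ β h : ℝ) (M : ℕ) (U : Quad d L → ℂ) : ℂ :=
  1 + ∑ n ∈ Finset.Icc 1 (L ^ d * M), coefTermD d L t t' μ β h M n U

/-- The interaction weight `δ_{x,y} δ_{z,w} δ_{x,z} + λ_{x,y,z,w} + λ_{z,w,x,y}`
appearing in `G_n(λ)`. -/
def lamCoef (d L : ℕ) (lam : Quad d L → ℝ) (q : Quad d L) : ℂ :=
  (((if q.1 = q.2.1 ∧ q.2.2.1 = q.2.2.2 ∧ q.1 = q.2.2.1 then (1 : ℝ) else 0)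
      + lam q + lam (q.2.2.1, q.2.2.2, q.1, q.2.1) : ℝ) : ℂ)

/-- `G_n(λ)` (continuum). -/
def Gcont (d L : ℕ) [NeZero L] (t t' μ β : ℝ) (n : ℕ) (lam : Quad d L → ℝ) : ℂ :=
  coefTerm d L t t' μ β n (lamCoef d L lam)

/-- `G_{h,n}(λ)` (discretized). -/
def Gdisc (d L : ℕ) [NeZero L] (t t' μ β h : ℝ) (M : ℕ) (n : ℕ)
    (lam : Quad d L → ℝ) : ℂ :=
  coefTermD d L t t' μ β h M n (lamCoef d L lam)

/-- The logarithmic combination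
`∑_{j=1}^{n+1} ((−1)^{j−1}/j) ∑_{m₁+⋯+m_j=n+1, m_k ≥ 1} ∏_k G_{m_k}(λ)`. -/
def logComb {α : Type*} (G : ℕ → α → ℂ) (n : ℕ) (lam : α) : ℂ :=
  ∑ j ∈ Finset.Icc 1 (n + 1), ((-1 : ℂ)) ^ (j - 1) / (j : ℂ) *
    ∑ m ∈ (Finset.Nat.antidiagonalTuple j (n + 1)).filter fun m => ∀ k, 1 ≤ m k,
      ∏ k : Fin j, G (m k) lam

/-- The continuum perturbation coefficient `a_n`, as the derivative in the
direction of the parameter `λ_{X̃₁}` at `λ = 0`. -/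
def aCont (d L : ℕ) [NeZero L] (t t' μ β : ℝ) (X1 : Quad d L) (n : ℕ) : ℂ :=
  -(1 / (β : ℂ)) *
    deriv (fun ε : ℝ =>
      logComb (Gcont d L t t' μ β) n fun q => if q = X1 then ε else 0) 0

/-- The discretized perturbation coefficient `a_{h,n}`. -/
def aDisc (d L : ℕ) [NeZero L] (t t' μ β h : ℝ) (M : ℕ) (X1 : Quad d L) (n : ℕ) : ℂ :=
  -(1 / (β : ℂ)) *
    deriv (fun ε : ℝ =>
      logComb (Gdisc d L t t' μ β h M) n fun q => if q = X1 then ε else 0) 0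

/-- The discretized `L¹`-norm `D_h` of the covariance, where `M = βh`. -/
def Dh (d L : ℕ) [NeZero L] (t t' μ β h : ℝ) (M : ℕ) : ℝ :=
  (1 / h) *
    ∑ x : Fin d → ZMod L, ∑ m : Fin (2 * M),
      ‖Cov d L t t' μ β x true (-β + (m : ℝ) / h) 0 true 0‖

/-- The decay constant `D = ∫_{−β}^{β} ds ∑_{x∈Γ} |C(x↑s, 0↑0)|`. -/
def Dc (d L : ℕ) [NeZero L] (t t' μ β : ℝ) : ℝ :=
  ∫ s in (-β)..β,
    ∑ x : Fin d → ZMod L, ‖Cov d L t t' μ β x true s 0 true 0‖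

end

namespace MatsuAux

noncomputable def zeta (N j : ℕ) : ℂ :=
  Complex.exp (-(Complex.I * ((Real.pi * (2*(j:ℝ)+1) / (2*(N:ℝ)) - Real.pi : ℝ) : ℂ)))

lemma zeta_ne_zero (N j : ℕ) : zeta N j ≠ 0 := Complex.exp_ne_zero _

lemma zeta_zpow (N j : ℕ) (p : ℤ) :
    zeta N j ^ p
      = Complex.exp ((p : ℂ) * (-(Complex.I *
          ((Real.pi * (2*(j:ℝ)+1) / (2*(N:ℝ)) - Real.pi : ℝ) : ℂ)))) :=
  (Complex.exp_int_mul _ p).symm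

lemma zeta_pow (N : ℕ) (hN : 0 < N) (j : ℕ) : zeta N j ^ (2*N) = -1 := by
  have hNc : ((N:ℕ):ℂ) ≠ 0 := Nat.cast_ne_zero.2 hN.ne'
  rw [zeta, ← Complex.exp_nat_mul]
  have harg : ((2*N : ℕ) : ℂ) * (-(Complex.I *
        ((Real.pi * (2*(j:ℝ)+1) / (2*(N:ℝ)) - Real.pi : ℝ) : ℂ)))
      = ((-(2*(j:ℤ)+1) : ℤ) : ℂ) * (Real.pi * Complex.I)
        + ((N:ℤ) : ℂ) * (2 * Real.pi * Complex.I) := by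
    push_cast
    field_simp
    ring
  rw [harg, Complex.exp_add, Complex.exp_int_mul_two_pi_mul_I, mul_one,
    Complex.exp_int_mul, Complex.exp_pi_mul_I]
  exact Odd.neg_one_zpow ⟨-(j:ℤ)-1, by ring⟩

lemma zeta_zpow_exp (N : ℕ) (hN : 0 < N) (j : ℕ) (p : ℤ) :
    zeta N j ^ p
      = Complex.exp ((p:ℂ) * Real.pi * Complex.I - (p:ℂ) * Real.pi * Complex.I / (2*(N:ℂ)))
          * Complex.exp (-(p:ℂ) * Real.pi * Complex.I / (N:ℂ)) ^ j := by
  have hNc : ((N:ℕ):ℂ) ≠ 0 := Nat.cast_ne_zero.2 hN.ne'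
  rw [zeta_zpow, ← Complex.exp_nat_mul, ← Complex.exp_add]
  congr 1
  push_cast
  field_simp
  ring

lemma rootsum_zero (N : ℕ) (hN : 0 < N) (p : ℤ) (hdvd : ¬ (2*(N:ℤ)) ∣ p) :
    ∑ j : Fin (2*N), zeta N j ^ p = 0 := by
  have hNc : ((N:ℕ):ℂ) ≠ 0 := Nat.cast_ne_zero.2 hN.ne'
  set r : ℂ := Complex.exp (-(p:ℂ) * Real.pi * Complex.I / (N:ℂ)) with hr
  have hr1 : r ≠ 1 := by
    intro hcon
    rw [hr, Complex.exp_eq_one_iff] at hcon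
    obtain ⟨n, hn⟩ := hcon
    apply hdvd
    have hπ : (Real.pi : ℂ) ≠ 0 := Complex.ofReal_ne_zero.2 Real.pi_ne_zero
    have hI : Complex.I ≠ 0 := Complex.I_ne_zero
    field_simp at hn
    have h0 : ((p:ℂ) + 2*n*N) * ((Real.pi:ℂ) * Complex.I) = 0 := by
      linear_combination (-((Real.pi:ℂ) * Complex.I)) * hn
    rcases mul_eq_zero.1 h0 with h1 | h2
    · have hp : (p:ℤ) = -(2*n*N) := by
        have : ((p:ℂ)) = ((-(2*n*(N:ℤ)) : ℤ) : ℂ) := by push_cast; linear_combination h1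
        exact_mod_cast this
      exact ⟨-n, by rw [hp]; push_cast; ring⟩
    · exact absurd h2 (mul_ne_zero hπ hI)

  have hrN : r ^ (2*N) = 1 := by
    rw [hr, ← Complex.exp_nat_mul]
    have : ((2*N : ℕ):ℂ) * (-(p:ℂ) * Real.pi * Complex.I / (N:ℂ))
        = ((-p : ℤ):ℂ) * (2 * Real.pi * Complex.I) := by
      push_cast; field_simp
    rw [this, Complex.exp_int_mul_two_pi_mul_I]
  calc ∑ j : Fin (2*N), zeta N j ^ p
      = ∑ j : Fin (2*N),
          Complex.exp ((p:ℂ) * Real.pi * Complex.I - (p:ℂ) * Real.pi * Complex.I / (2*(N:ℂ)))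
            * r ^ (j:ℕ) := by
        exact Finset.sum_congr rfl fun j _ => zeta_zpow_exp N hN j p
    _ = Complex.exp ((p:ℂ) * Real.pi * Complex.I - (p:ℂ) * Real.pi * Complex.I / (2*(N:ℂ)))
          * ∑ j ∈ Finset.range (2*N), r ^ j := by
        rw [Finset.mul_sum, ← Fin.sum_univ_eq_sum_range]
    _ = 0 := by
        rw [geom_sum_eq hr1, hrN]
        simp

lemma exp_ratio (A B : ℝ) :
    Real.exp (B - A) / (1 + Real.exp B) = Real.exp (-A) / (1 + Real.exp (-B)) := by
  rw [Real.exp_sub, Real.exp_neg A, Real.exp_neg B]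
  have h1 : 0 < 1 + Real.exp B := by positivity
  have h2 : Real.exp B ≠ 0 := (Real.exp_pos B).ne'
  rw [div_eq_div_iff (by positivity) (by positivity)]
  field_simp
  ring

lemma key (N : ℕ) (hN : 0 < N) (ε : ℝ) (m : ℤ)
    (hm1 : -(2*(N:ℤ)) < m) (hm2 : m < 2*(N:ℤ)) :
    ∑ j : Fin (2*N), zeta N j ^ m / (1 - ((Real.exp ε : ℝ) : ℂ) * zeta N j)
      = ((2*(N:ℝ) * (Real.exp (-((m:ℝ)*ε)) *
          (if m ≤ 0 then 1/(1+Real.exp (2*(N:ℝ)*ε))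
            else -(1/(1+Real.exp (-(2*(N:ℝ)*ε)))))) : ℝ) : ℂ) := by
  have hNc : ((N:ℕ):ℂ) ≠ 0 := Nat.cast_ne_zero.2 hN.ne'
  set q : ℝ := Real.exp ε with hq
  have hqpos : 0 < q := Real.exp_pos ε
  have hcpos : (0:ℝ) < 1 + q^(2*N) := by positivity
  have hcne : ((1 + q^(2*N) : ℝ) : ℂ) ≠ 0 := Complex.ofReal_ne_zero.2 hcpos.ne'
  have hden : ∀ j : ℕ, (1 - (q:ℂ) * zeta N j)
      * (∑ r ∈ Finset.range (2*N), ((q:ℂ) * zeta N j)^r) = ((1 + q^(2*N) : ℝ) : ℂ) := by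
    intro j
    have h2 : ((q:ℂ) * zeta N j)^(2*N) = -(q:ℂ)^(2*N) := by
      rw [mul_pow, zeta_pow N hN j]; ring
    have h3 := geom_sum_mul ((q:ℂ) * zeta N j) (2*N)
    push_cast
    linear_combination -h3 - h2
  have hdj : ∀ j : ℕ, (1 - (q:ℂ) * zeta N j) ≠ 0 := by
    intro j h0
    have h1 := hden j
    rw [h0, zero_mul] at h1
    exact hcne h1.symm
  have hterm : ∀ j : ℕ, zeta N j ^ m / (1 - (q:ℂ) * zeta N j)
      = (∑ r ∈ Finset.range (2*N), (q:ℂ)^r * zeta N j ^ (m + r)) / ((1 + q^(2*N) : ℝ) : ℂ) := by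
    intro j
    rw [div_eq_div_iff (hdj j) hcne, ← hden j]
    have hsum : (∑ r ∈ Finset.range (2*N), (q:ℂ)^r * zeta N j ^ (m + (r:ℤ)))
        = zeta N j ^ m * ∑ r ∈ Finset.range (2*N), ((q:ℂ) * zeta N j)^r := by
      rw [Finset.mul_sum]
      refine Finset.sum_congr rfl fun r _ => ?_
      rw [zpow_add₀ (zeta_ne_zero N j), zpow_natCast, mul_pow]
      ring
    rw [hsum]
    ring
  simp only [hterm]
  rw [← Finset.sum_div]
  rw [Finset.sum_comm]
  have hNZ : (0:ℤ) < 2*(N:ℤ) := by positivity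
  have hzero : ∀ r ∈ Finset.range (2*N), (r:ℤ) ≠ -m → (r:ℤ) ≠ 2*(N:ℤ) - m →
      ∑ j : Fin (2*N), (q:ℂ)^r * zeta N (j:ℕ) ^ (m + (r:ℤ)) = 0 := by
    intro r hr h1 h2
    have hrlt := Finset.mem_range.1 hr
    rw [← Finset.mul_sum, rootsum_zero N hN _ ?_, mul_zero]
    rintro ⟨c, hc⟩
    have hc0 : 0 ≤ c := by nlinarith
    have hc1 : c ≤ 1 := by nlinarith
    interval_cases c <;> omega
  by_cases hm : m ≤ 0
  · set r₀ : ℕ := (-m).toNat with hr₀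
    have hr₀m : (r₀:ℤ) = -m := Int.toNat_of_nonneg (by omega)
    have hr₀mem : r₀ ∈ Finset.range (2*N) := Finset.mem_range.2 (by omega)
    have hS : ∑ r ∈ Finset.range (2*N), ∑ j : Fin (2*N), (q:ℂ)^r * zeta N (j:ℕ) ^ (m + (r:ℤ))
        = (q:ℂ)^r₀ * ((2*N : ℕ) : ℂ) := by
      rw [Finset.sum_eq_single_of_mem r₀ hr₀mem (fun r hr hne =>
        hzero r hr (by have := Finset.mem_range.1 hr; omega)
          (by have := Finset.mem_range.1 hr; omega))]
      rw [show m + (r₀:ℤ) = 0 by omega]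
      simp [Finset.card_univ, mul_comm]
    rw [hS, if_pos hm]
    have hq1 : q^r₀ = Real.exp (-((m:ℝ)*ε)) := by
      rw [hq, ← Real.exp_nat_mul]
      congr 1
      have : (r₀:ℝ) = -(m:ℝ) := by exact_mod_cast hr₀m
      rw [this]; ring
    have hq2 : q^(2*N) = Real.exp (2*(N:ℝ)*ε) := by
      rw [hq, ← Real.exp_nat_mul]
      congr 1
      push_cast; ring
    have hre : q^r₀ * ((2*N:ℕ):ℝ) / (1+q^(2*N))
        = 2*(N:ℝ) * (Real.exp (-((m:ℝ)*ε)) * (1/(1+Real.exp (2*(N:ℝ)*ε)))) := by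
      rw [hq1, hq2]; push_cast; ring
    calc (q:ℂ)^r₀ * ((2*N:ℕ):ℂ) / ((1 + q^(2*N) : ℝ):ℂ)
        = ((q^r₀ * ((2*N:ℕ):ℝ) / (1+q^(2*N)) : ℝ) : ℂ) := by push_cast; ring
      _ = _ := by rw [hre]
  · set r₀ : ℕ := (2*(N:ℤ)-m).toNat with hr₀
    have hr₀m : (r₀:ℤ) = 2*(N:ℤ) - m := Int.toNat_of_nonneg (by omega)
    have hr₀mem : r₀ ∈ Finset.range (2*N) := Finset.mem_range.2 (by omega)
    have hS : ∑ r ∈ Finset.range (2*N), ∑ j : Fin (2*N), (q:ℂ)^r * zeta N (j:ℕ) ^ (m + (r:ℤ))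
        = -((q:ℂ)^r₀ * ((2*N : ℕ) : ℂ)) := by
      rw [Finset.sum_eq_single_of_mem r₀ hr₀mem (fun r hr hne =>
        hzero r hr (by have := Finset.mem_range.1 hr; omega)
          (by have := Finset.mem_range.1 hr; omega))]
      rw [show m + (r₀:ℤ) = ((2*N:ℕ):ℤ) by push_cast; omega]
      simp only [zpow_natCast, zeta_pow N hN]
      simp [Finset.card_univ, mul_comm]
    rw [hS, if_neg hm]
    have hq1 : q^r₀ = Real.exp (2*(N:ℝ)*ε - (m:ℝ)*ε) := by
      rw [hq, ← Real.exp_nat_mul]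
      congr 1
      have : (r₀:ℝ) = 2*(N:ℝ) - (m:ℝ) := by exact_mod_cast hr₀m
      rw [this]; ring
    have hq2 : q^(2*N) = Real.exp (2*(N:ℝ)*ε) := by
      rw [hq, ← Real.exp_nat_mul]
      congr 1
      push_cast; ring
    have hre : -(q^r₀ * ((2*N:ℕ):ℝ)) / (1+q^(2*N))
        = 2*(N:ℝ) * (Real.exp (-((m:ℝ)*ε)) * (-(1/(1+Real.exp (-(2*(N:ℝ)*ε)))))) := by
      rw [hq1, hq2]
      have h3 := exp_ratio ((m:ℝ)*ε) (2*(N:ℝ)*ε)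
      rw [div_eq_div_iff (by positivity) (by positivity)] at h3
      push_cast
      have p2 : (0:ℝ) < 1 + Real.exp (2*(N:ℝ)*ε) := by positivity
      have p4 : (0:ℝ) < 1 + Real.exp (-(2*(N:ℝ)*ε)) := by positivity
      rw [div_eq_iff p2.ne']
      have e : Real.exp (-((m:ℝ)*ε)) * (1 + Real.exp (2*(N:ℝ)*ε)) * (1 / (1 + Real.exp (-(2*(N:ℝ)*ε))))
          = Real.exp (2*(N:ℝ)*ε - (m:ℝ)*ε) := by
        rw [← h3, mul_assoc, mul_one_div_cancel p4.ne', mul_one]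
      linear_combination (2*(N:ℝ)) * e
    calc -((q:ℂ)^r₀ * ((2*N:ℕ):ℂ)) / ((1 + q^(2*N) : ℝ):ℂ)
        = ((-(q^r₀ * ((2*N:ℕ):ℝ)) / (1+q^(2*N)) : ℝ) : ℂ) := by push_cast; ring
      _ = _ := by rw [hre]

lemma zeta_def (N j : ℕ) : zeta N j
    = Complex.exp (-(Complex.I * ((Real.pi * (2*(j:ℝ)+1) / (2*(N:ℝ)) - Real.pi : ℝ) : ℂ))) := rfl

lemma cast_scale (c h X : ℝ) (hh : h ≠ 0) :
    (1/(h:ℂ)) * Complex.ofReal ((c*h)*X) = (c:ℂ) * Complex.ofReal X := by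
  have hhc : (h:ℂ) ≠ 0 := Complex.ofReal_ne_zero.2 hh
  push_cast
  field_simp

lemma inner_sum (β h E : ℝ) (hβ : 0 < β) (hh : 0 < h) (N : ℕ) (hN : 0 < N)
    (hM : β*h = 2*(N:ℝ)) (a b : Fin (2*N)) :
    ∑ j : Fin (2*N),
      Complex.exp (-(Complex.I * Complex.ofReal
          ((-Real.pi*h + Real.pi/β + 2*Real.pi*(j:ℝ)/β) * ((b:ℝ)/h - (a:ℝ)/h)))) /
        ((h:ℂ) * (1 - Complex.exp
          (-(Complex.I * Complex.ofReal (-Real.pi*h + Real.pi/β + 2*Real.pi*(j:ℝ)/β))/(h:ℂ)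
            + Complex.ofReal E/(h:ℂ))))
      = (β:ℂ) * Complex.ofReal (Real.exp (-(((b:ℝ)/h - (a:ℝ)/h) * E)) *
          (if (b:ℝ)/h - (a:ℝ)/h ≤ 0 then 1/(1+Real.exp (β*E))
            else -(1/(1+Real.exp (-(β*E)))))) := by
  have hh' : h ≠ 0 := hh.ne'
  have hβ' : β ≠ 0 := hβ.ne'
  have hN' : (N:ℝ) ≠ 0 := Nat.cast_ne_zero.2 hN.ne'
  set m : ℤ := (b:ℤ) - (a:ℤ) with hm
  have hm1 : -(2*(N:ℤ)) < m := by have := a.isLt; have := b.isLt; omega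
  have hm2 : m < 2*(N:ℤ) := by have := a.isLt; have := b.isLt; omega
  have hba : (b:ℝ)/h - (a:ℝ)/h = (m:ℝ)/h := by
    rw [hm]; push_cast; ring
  have hω : ∀ j : ℕ, (-Real.pi*h + Real.pi/β + 2*Real.pi*(j:ℝ)/β) * ((b:ℝ)/h - (a:ℝ)/h)
      = (m:ℝ) * (Real.pi * (2*(j:ℝ)+1) / (2*(N:ℝ)) - Real.pi) := by
    intro j
    rw [hba, show (2*(N:ℝ)) = β*h from hM.symm]
    field_simp
    ring
  have hωh : ∀ j : ℕ, (-Real.pi*h + Real.pi/β + 2*Real.pi*(j:ℝ)/β)/h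
      = Real.pi * (2*(j:ℝ)+1) / (2*(N:ℝ)) - Real.pi := by
    intro j
    rw [show (2*(N:ℝ)) = β*h from hM.symm]
    field_simp
    ring
  calc ∑ j : Fin (2*N),
      Complex.exp (-(Complex.I * Complex.ofReal
          ((-Real.pi*h + Real.pi/β + 2*Real.pi*(j:ℝ)/β) * ((b:ℝ)/h - (a:ℝ)/h)))) /
        ((h:ℂ) * (1 - Complex.exp
          (-(Complex.I * Complex.ofReal (-Real.pi*h + Real.pi/β + 2*Real.pi*(j:ℝ)/β))/(h:ℂ)
            + Complex.ofReal E/(h:ℂ))))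
      = ∑ j : Fin (2*N), (1/(h:ℂ)) *
          (zeta N (j:ℕ) ^ m / (1 - ((Real.exp (E/h) : ℝ):ℂ) * zeta N (j:ℕ))) := by
        refine Finset.sum_congr rfl fun j _ => ?_
        rw [show -(Complex.I * Complex.ofReal
            ((-Real.pi*h + Real.pi/β + 2*Real.pi*(j:ℝ)/β) * ((b:ℝ)/h - (a:ℝ)/h)))
            = (m:ℂ) * (-(Complex.I *
              ((Real.pi * (2*((j:ℕ):ℝ)+1) / (2*(N:ℝ)) - Real.pi : ℝ) : ℂ))) from by
          rw [hω (j:ℕ)]; push_cast; ring]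
        rw [← zeta_zpow]
        rw [show -(Complex.I * Complex.ofReal
              (-Real.pi*h + Real.pi/β + 2*Real.pi*(j:ℝ)/β))/(h:ℂ) + Complex.ofReal E/(h:ℂ)
            = ((E/h : ℝ):ℂ) + (-(Complex.I *
              ((Real.pi * (2*((j:ℕ):ℝ)+1) / (2*(N:ℝ)) - Real.pi : ℝ) : ℂ))) from by
          rw [← hωh (j:ℕ)]; push_cast; ring]
        rw [Complex.exp_add, ← zeta_def, ← Complex.ofReal_exp]
        rw [div_mul_eq_div_div_swap, one_div, ← div_eq_inv_mul]
    _ = (1/(h:ℂ)) * ∑ j : Fin (2*N),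
          zeta N (j:ℕ) ^ m / (1 - ((Real.exp (E/h) : ℝ):ℂ) * zeta N (j:ℕ)) := by
        rw [Finset.mul_sum]
    _ = (1/(h:ℂ)) * Complex.ofReal (2*(N:ℝ) * (Real.exp (-((m:ℝ)*(E/h))) *
          (if m ≤ 0 then 1/(1+Real.exp (2*(N:ℝ)*(E/h)))
            else -(1/(1+Real.exp (-(2*(N:ℝ)*(E/h)))))))) := by
        rw [key N hN (E/h) m hm1 hm2]
    _ = (β:ℂ) * Complex.ofReal (Real.exp (-(((b:ℝ)/h - (a:ℝ)/h) * E)) *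
          (if (b:ℝ)/h - (a:ℝ)/h ≤ 0 then 1/(1+Real.exp (β*E))
            else -(1/(1+Real.exp (-(β*E)))))) := by
        have hE2 : 2*(N:ℝ)*(E/h) = β*E := by
          rw [show (2*(N:ℝ)) = β*h from hM.symm]; field_simp
        have hE1 : -((m:ℝ)*(E/h)) = -(((b:ℝ)/h - (a:ℝ)/h) * E) := by
          rw [hba]; ring
        have hcond : ((b:ℝ)/h - (a:ℝ)/h ≤ 0) ↔ (m ≤ 0) := by
          rw [hba, div_nonpos_iff]
          constructor
          · rintro (⟨h1,h2⟩|⟨h1,h2⟩)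
            · exact absurd hh (by linarith)
            · exact_mod_cast h1
          · intro h1
            right
            exact ⟨by exact_mod_cast h1, hh.le⟩
        rw [hE2, hE1, show (if m ≤ 0 then 1/(1+Real.exp (β*E))
            else -(1/(1+Real.exp (-(β*E)))))
          = (if (b:ℝ)/h - (a:ℝ)/h ≤ 0 then 1/(1+Real.exp (β*E))
            else -(1/(1+Real.exp (-(β*E))))) from if_congr hcond.symm rfl rfl]
        rw [show 2*(N:ℝ) * (Real.exp (-(((b:ℝ)/h - (a:ℝ)/h) * E)) *
          (if (b:ℝ)/h - (a:ℝ)/h ≤ 0 then 1/(1+Real.exp (β*E))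
            else -(1/(1+Real.exp (-(β*E)))))) = (β*h) * (Real.exp (-(((b:ℝ)/h - (a:ℝ)/h) * E)) *
          (if (b:ℝ)/h - (a:ℝ)/h ≤ 0 then 1/(1+Real.exp (β*E))
            else -(1/(1+Real.exp (-(β*E)))))) from by rw [hM]]
        exact cast_scale β h _ hh'

end MatsuAux

/-- Matsubara representation of the covariance on the grid `[0,β)_h`, with `βh = 2N`:
`C(xσs, yτu) = (δ_{σ,τ}/(βL^d)) ∑_{k∈Γ*} ∑_{ω∈M_h} e^{i⟨k,y−x⟩} e^{−iω(u−s)} /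
(h(1 − e^{−iω/h + E_k/h}))`, where `M_h` is parametrized by
`ω_j = −πh + π/β + 2πj/β`, `j = 0,…,2N−1`. -/


theorem covariance_matsubara_representation (d L : ℕ) [NeZero L] (t t' μ β : ℝ)
    (hβ : 0 < β) (h : ℝ) (hh : 0 < h) (N : ℕ) (hM : β * h = 2 * N)
    (x y : Fin d → ZMod L) (σ τ : Bool) (a b : Fin (2 * N)) :
    Cov d L t t' μ β x σ ((a : ℝ) / h) y τ ((b : ℝ) / h)
      = ((if σ = τ then (1 : ℂ) else 0) / ((β * (L : ℝ) ^ d : ℝ) : ℂ)) *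
          ∑ k : Fin d → ZMod L, ∑ j : Fin (2 * N),
            Complex.exp (Complex.I * Complex.ofReal (phase d L k (y - x))) *
              Complex.exp (-(Complex.I *
                Complex.ofReal ((-Real.pi * h + Real.pi / β + 2 * Real.pi * (j : ℝ) / β)
                  * ((b : ℝ) / h - (a : ℝ) / h)))) /
              ((h : ℂ) * (1 - Complex.exp
                (-(Complex.I *
                    Complex.ofReal (-Real.pi * h + Real.pi / β
                      + 2 * Real.pi * (j : ℝ) / β)) / h
                  + Complex.ofReal (disp d L t t' μ k) / h))) := by

  have hN : 0 < N := by
    rcases Nat.eq_zero_or_pos N with h0 | h1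
    · exfalso
      rw [h0] at hM
      push_cast at hM
      nlinarith
    · exact h1
  have hM' : β * h = 2*(N:ℝ) := by exact_mod_cast hM
  by_cases hστ : σ = τ
  · rw [Cov, if_pos hστ]
    have hkey : ∀ k : Fin d → ZMod L,
        ∑ j : Fin (2 * N),
            Complex.exp (Complex.I * Complex.ofReal (phase d L k (y - x))) *
              Complex.exp (-(Complex.I *
                Complex.ofReal ((-Real.pi * h + Real.pi / β + 2 * Real.pi * (j : ℝ) / β)
                  * ((b : ℝ) / h - (a : ℝ) / h)))) /
              ((h : ℂ) * (1 - Complex.exp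
                (-(Complex.I *
                    Complex.ofReal (-Real.pi * h + Real.pi / β
                      + 2 * Real.pi * (j : ℝ) / β)) / h
                  + Complex.ofReal (disp d L t t' μ k) / h)))
          = (β:ℂ) * (Complex.exp (Complex.I * (phase d L k (y - x) : ℂ)) *
              (Real.exp (-(((b:ℝ)/h - (a:ℝ)/h) * disp d L t t' μ k)) : ℂ) *
              ((if (b:ℝ)/h - (a:ℝ)/h ≤ 0 then
                  1 / (1 + Real.exp (β * disp d L t t' μ k))
                else -(1 / (1 + Real.exp (-(β * disp d L t t' μ k)))) : ℝ) : ℂ)) := by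
      intro k
      have hin := MatsuAux.inner_sum β h (disp d L t t' μ k) hβ hh N hN hM' a b
      calc ∑ j : Fin (2 * N),
            Complex.exp (Complex.I * Complex.ofReal (phase d L k (y - x))) *
              Complex.exp (-(Complex.I *
                Complex.ofReal ((-Real.pi * h + Real.pi / β + 2 * Real.pi * (j : ℝ) / β)
                  * ((b : ℝ) / h - (a : ℝ) / h)))) /
              ((h : ℂ) * (1 - Complex.exp
                (-(Complex.I *
                    Complex.ofReal (-Real.pi * h + Real.pi / β
                      + 2 * Real.pi * (j : ℝ) / β)) / h
                  + Complex.ofReal (disp d L t t' μ k) / h)))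
          = Complex.exp (Complex.I * Complex.ofReal (phase d L k (y - x))) *
              ∑ j : Fin (2 * N),
                Complex.exp (-(Complex.I *
                  Complex.ofReal ((-Real.pi * h + Real.pi / β + 2 * Real.pi * (j : ℝ) / β)
                    * ((b : ℝ) / h - (a : ℝ) / h)))) /
                ((h : ℂ) * (1 - Complex.exp
                  (-(Complex.I *
                      Complex.ofReal (-Real.pi * h + Real.pi / β
                        + 2 * Real.pi * (j : ℝ) / β)) / h
                    + Complex.ofReal (disp d L t t' μ k) / h))) := by
            rw [Finset.mul_sum]
            exact Finset.sum_congr rfl fun j _ => mul_div_assoc _ _ _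
        _ = _ := by
            rw [hin, Complex.ofReal_mul]
            ring
    simp only [hkey]
    rw [← Finset.mul_sum]
    have hLc : ((L:ℕ):ℂ) ≠ 0 := Nat.cast_ne_zero.2 (NeZero.ne L)
    have hβc : (β:ℂ) ≠ 0 := Complex.ofReal_ne_zero.2 hβ.ne'
    have hcast : ((β * (L:ℝ)^d : ℝ) : ℂ) = (β:ℂ) * ((L:ℕ):ℂ)^d := by push_cast; ring
    rw [hcast]
    rw [← mul_assoc]
    congr 1
    field_simp
  · simp [Cov, hστ]
end

section
/- Let h > 0 with βh ∈ 2ℕ, and let C_h be the square matrix ( C(xσs, yτu) ) indexed by (x,σ,s), (y,τ,u) ∈ Γ × {↑,↓} × [0,β)_h. Then det C_h = 1 / ∏_{k ∈ Γ*} (1 + e^{β E_k})², and in particular det C_h > 0 and is independent of h. -/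
open scoped Real BigOperators
open MeasureTheory

namespace CovDet


variable (L : ℕ) [NeZero L]

/-- Character `e^{2πi a c / L}` with integer arguments. -/
noncomputable def ch (a c : ℤ) : ℂ :=
  Complex.exp (Complex.I * (2 * Real.pi * a * c / L))

lemma hLC : (L : ℂ) ≠ 0 := Nat.cast_ne_zero.mpr (NeZero.ne L)

lemma ch_congr (a : ℤ) {c₁ c₂ : ℤ} (hc : (c₁ : ZMod L) = (c₂ : ZMod L)) :
    ch L a c₁ = ch L a c₂ := by
  obtain ⟨m, hm⟩ : (L : ℤ) ∣ (c₁ - c₂) := by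
    rwa [← ZMod.intCast_zmod_eq_zero_iff_dvd, Int.cast_sub, sub_eq_zero]
  have h1 : (c₁ : ℂ) = c₂ + L * m := by
    have : c₁ = c₂ + L * m := by linarith
    exact_mod_cast this
  have : Complex.I * (2 * Real.pi * a * c₁ / L)
      = Complex.I * (2 * Real.pi * a * c₂ / L) + ((a * m : ℤ) : ℂ) * (2 * Real.pi * Complex.I) := by
    field_simp [h1, hLC]
    push_cast
    linear_combination ((a : ℂ) * (L : ℂ)⁻¹) * h1 + ((a : ℂ) * m) * mul_inv_cancel₀ (hLC L)
  rw [ch, ch, this, Complex.exp_add, Complex.exp_int_mul_two_pi_mul_I, mul_one]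

lemma ch_add_right (a c c' : ℤ) : ch L a (c + c') = ch L a c * ch L a c' := by
  rw [ch, ch, ch, ← Complex.exp_add]
  congr 1
  have := hLC L
  push_cast
  field_simp

lemma ch_add_left (a b c : ℤ) : ch L (a + b) c = ch L a c * ch L b c := by
  rw [ch, ch, ch, ← Complex.exp_add]
  congr 1
  have := hLC L
  push_cast
  field_simp

@[simp] lemma ch_zero_right (a : ℤ) : ch L a 0 = 1 := by simp [ch]

lemma ch_inv (a c : ℤ) : (ch L a c)⁻¹ = ch L (-a) c := by
  apply inv_eq_of_mul_eq_one_right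
  rw [← ch_add_left]
  simp [ch]

lemma ch_ne_zero (a c : ℤ) : ch L a c ≠ 0 := Complex.exp_ne_zero _

lemma ch_sum (a : ℤ) :
    ∑ b : ZMod L, ch L a (b.val : ℤ) = if (a : ZMod L) = 0 then (L : ℂ) else 0 := by
  have hL := hLC L
  set ζ : ℂ := Complex.exp (Complex.I * (2 * Real.pi * a / L)) with hζdef
  have hch : ∀ n : ℕ, ch L a (n : ℤ) = ζ ^ n := by
    intro n
    rw [hζdef, ← Complex.exp_nat_mul, ch]
    congr 1
    push_cast
    ring
  have hsum : ∑ b : ZMod L, ch L a (b.val : ℤ) = ∑ j ∈ Finset.range L, ζ ^ j := by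
    refine Finset.sum_nbij' (fun b => b.val) (fun j => (j : ZMod L)) ?_ ?_ ?_ ?_ ?_
    · intro b _; exact Finset.mem_range.mpr b.val_lt
    · intro j _; exact Finset.mem_univ _
    · intro b _; exact (ZMod.natCast_rightInverse b)
    · intro j hj; exact ZMod.val_cast_of_lt (Finset.mem_range.mp hj)
    · intro b _; exact hch b.val
  rw [hsum]
  by_cases h0 : (a : ZMod L) = 0
  · obtain ⟨m, hm⟩ := (ZMod.intCast_zmod_eq_zero_iff_dvd a L).mp h0
    have : ζ = 1 := by
      rw [hζdef, hm]
      have : (Complex.I * (2 * Real.pi * ((L * m : ℤ) : ℂ) / L)) = (m : ℂ) * (2 * Real.pi * Complex.I) := by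
        push_cast
        field_simp
      rw [this, Complex.exp_int_mul_two_pi_mul_I]
    simp [h0, this]
  · have hζL : ζ ^ L = 1 := by
      rw [hζdef, ← Complex.exp_nat_mul]
      have : (L : ℂ) * (Complex.I * (2 * Real.pi * a / L)) = (a : ℂ) * (2 * Real.pi * Complex.I) := by
        field_simp
      rw [this, Complex.exp_int_mul_two_pi_mul_I]
    have hζ1 : ζ ≠ 1 := by
      intro h1
      obtain ⟨n, hn⟩ := Complex.exp_eq_one_iff.mp (hζdef ▸ h1)
      have : (a : ℂ) = n * L := by
        have h2 : (2 * (Real.pi : ℂ) * Complex.I) ≠ 0 := by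
          simp [Real.pi_ne_zero, Complex.I_ne_zero, Complex.ofReal_ne_zero]
        field_simp at hn
        have h3 : (2 * (Real.pi : ℂ) * Complex.I) * (a : ℂ)
            = (2 * (Real.pi : ℂ) * Complex.I) * ((n : ℂ) * L) := by linear_combination (2 * (Real.pi : ℂ) * Complex.I) * hn
        have := mul_left_cancel₀ h2 h3
        rw [this]
      have : a = n * L := by exact_mod_cast this
      exact h0 (by rw [this]; push_cast; simp)
    rw [geom_sum_eq hζ1, hζL, sub_self, zero_div]
    simp [h0]


variable (d : ℕ)

lemma exp_phase (k x : Fin d → ZMod L) :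
    Complex.exp (Complex.I * ((phase d L k x : ℝ) : ℂ))
      = ∏ j : Fin d, ch L ((k j).val : ℤ) ((x j).val : ℤ) := by
  rw [phase]
  push_cast
  rw [Finset.mul_sum, Complex.exp_sum]
  refine Finset.prod_congr rfl fun j _ => ?_
  rw [ch]
  congr 1
  push_cast
  ring

lemma exp_phase_mul (k x y : Fin d → ZMod L) :
    Complex.exp (Complex.I * ((phase d L k (y - x) : ℝ) : ℂ))
        * Complex.exp (Complex.I * ((phase d L k x : ℝ) : ℂ))
      = Complex.exp (Complex.I * ((phase d L k y : ℝ) : ℂ)) := by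
  rw [exp_phase, exp_phase, exp_phase, ← Finset.prod_mul_distrib]
  refine Finset.prod_congr rfl fun j _ => ?_
  rw [← ch_add_right]
  refine ch_congr L _ ?_
  have : (y - x) j + x j = y j := by simp
  push_cast [ZMod.natCast_val, ZMod.cast_id]
  simpa using congrArg id this

lemma exp_phase_sub (k x y : Fin d → ZMod L) :
    Complex.exp (Complex.I * ((phase d L k (y - x) : ℝ) : ℂ))
      = Complex.exp (Complex.I * ((phase d L k y : ℝ) : ℂ))
        * (Complex.exp (Complex.I * ((phase d L k x : ℝ) : ℂ)))⁻¹ := by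
  rw [eq_mul_inv_iff_mul_eq₀ (Complex.exp_ne_zero _)]
  exact exp_phase_mul L d k x y

set_option maxHeartbeats 1000000 in
lemma ortho (k k' : Fin d → ZMod L) :
    ∑ y : Fin d → ZMod L,
        Complex.exp (Complex.I * ((phase d L k y : ℝ) : ℂ))
          * (Complex.exp (Complex.I * ((phase d L k' y : ℝ) : ℂ)))⁻¹
      = if k = k' then ((L : ℂ)) ^ d else 0 := by
  have hterm : ∀ y : Fin d → ZMod L,
      Complex.exp (Complex.I * ((phase d L k y : ℝ) : ℂ))
          * (Complex.exp (Complex.I * ((phase d L k' y : ℝ) : ℂ)))⁻¹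
        = ∏ j : Fin d, ch L (((k j).val : ℤ) - ((k' j).val : ℤ)) ((y j).val : ℤ) := by
    intro y
    rw [exp_phase, exp_phase, ← Finset.prod_inv_distrib, ← Finset.prod_mul_distrib]
    refine Finset.prod_congr rfl fun j _ => ?_
    rw [ch_inv, ← ch_add_left, sub_eq_add_neg]
  simp only [hterm]
  rw [(Fintype.prod_sum (fun (j : Fin d) (b : ZMod L) =>
    ch L (((k j).val : ℤ) - ((k' j).val : ℤ)) ((b.val : ℤ)))).symm]
  have hzero : ∀ j : Fin d, ((((k j).val : ℤ) - ((k' j).val : ℤ) : ℤ) : ZMod L) = 0 ↔ k j = k' j := by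
    intro j
    push_cast [ZMod.natCast_val, ZMod.cast_id]
    rw [sub_eq_zero]
  by_cases hkk : k = k'
  · subst hkk
    simp only [ch_sum]
    simp
  · obtain ⟨j, hj⟩ : ∃ j, k j ≠ k' j := by
      by_contra hc
      push_neg at hc
      exact hkk (funext hc)
    rw [if_neg hkk]
    refine Finset.prod_eq_zero (Finset.mem_univ j) ?_
    rw [ch_sum, if_neg (fun hc => hj ((hzero j).mp hc))]

/-- The single-momentum block of the discretized covariance matrix. -/
noncomputable def gmat (M : ℕ) (β h Ek : ℝ) : Matrix (Fin M) (Fin M) ℂ :=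
  fun m n => ((Real.exp (-(((n : ℝ) / h - (m : ℝ) / h) * Ek)) : ℝ) : ℂ) *
    (((if (n : ℝ) / h - (m : ℝ) / h ≤ 0 then 1 / (1 + Real.exp (β * Ek))
        else -(1 / (1 + Real.exp (-(β * Ek))))) : ℝ) : ℂ)

omit [NeZero L] in
lemma gmat_eq (M : ℕ) (β h Ek : ℝ) (hh : 0 < h) (m n : Fin M) :
    gmat M β h Ek m n
      = ((Real.exp (((m : ℝ) - (n : ℝ)) / h * Ek) *
          (if (n : ℕ) ≤ (m : ℕ) then 1 / (1 + Real.exp (β * Ek))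
            else -(1 / (1 + Real.exp (-(β * Ek))))) : ℝ) : ℂ) := by
  have hcond : ((n : ℝ) / h - (m : ℝ) / h ≤ 0) ↔ ((n : ℕ) ≤ (m : ℕ)) := by
    rw [sub_nonpos, div_le_div_iff_of_pos_right hh, Nat.cast_le]
  have hexp : -(((n : ℝ) / h - (m : ℝ) / h) * Ek) = ((m : ℝ) - (n : ℝ)) / h * Ek := by ring
  rw [gmat]
  simp only [hexp, hcond]
  push_cast
  ring

omit [NeZero L] in
lemma det_gmat (M : ℕ) (hM : 0 < M) (β h Ek : ℝ) (hh : 0 < h) :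
    (gmat M β h Ek).det = ((1 / (1 + Real.exp (β * Ek)) : ℝ) : ℂ) := by
  obtain ⟨M, rfl⟩ : ∃ M', M = M' + 1 := ⟨M - 1, by omega⟩
  set a : ℝ := 1 / (1 + Real.exp (β * Ek)) with ha
  set cp : ℝ := 1 / (1 + Real.exp (-(β * Ek))) with hcp
  have hpos1 : (0 : ℝ) < 1 + Real.exp (β * Ek) := by positivity
  have hpos2 : (0 : ℝ) < 1 + Real.exp (-(β * Ek)) := by positivity
  have hac : a + cp = 1 := by
    rw [ha, hcp, Real.exp_neg]
    field_simp
    ring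
  set c : ℂ := ((Real.exp (Ek / h) : ℝ) : ℂ) with hc
  set Emat : Matrix (Fin (M + 1)) (Fin (M + 1)) ℂ :=
    (fun m r => (if m = r then 1 else 0) + (if (r : ℕ) + 1 = (m : ℕ) then -c else 0)) with hEmat
  have hdetE : Emat.det = 1 := by
    rw [Matrix.det_of_lowerTriangular Emat]
    · apply Finset.prod_eq_one
      intro i _
      simp [hEmat]
    · intro i j hij
      have hij' : (i : ℕ) < (j : ℕ) := hij
      have h1 : ¬ (i = j) := by intro hc'; rw [hc'] at hij'; omega
      have h2 : ¬ ((j : ℕ) + 1 = (i : ℕ)) := by omega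
      simp [hEmat, h1, h2]
  have hg : ∀ m n : Fin (M + 1), gmat (M + 1) β h Ek m n
      = ((Real.exp ((((m : ℕ) : ℝ) - ((n : ℕ) : ℝ)) / h * Ek) *
          (if (n : ℕ) ≤ (m : ℕ) then a else -cp) : ℝ) : ℂ) :=
    fun m n => gmat_eq (M + 1) β h Ek hh m n
  set w : Fin (M + 1) → ℂ := fun m => if m = 0 then 1 else 0 with hw
  set v : Fin (M + 1) → ℂ :=
    fun n => ((-cp * Real.exp (-(((n : ℕ) : ℝ) / h * Ek)) : ℝ) : ℂ) with hv
  have key : Emat * gmat (M + 1) β h Ek = 1 + Matrix.replicateCol Unit w * Matrix.replicateRow Unit v := by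
    ext m n
    have hrv : ((1 + Matrix.replicateCol Unit w * Matrix.replicateRow Unit v :
        Matrix (Fin (M + 1)) (Fin (M + 1)) ℂ)) m n
        = (if m = n then 1 else 0) + w m * v n := by
      rw [Matrix.add_apply, Matrix.mul_apply, Matrix.one_apply]
      simp [Matrix.replicateCol, Matrix.replicateRow]
    rw [Matrix.mul_apply, hrv]
    simp only [hEmat, add_mul, Finset.sum_add_distrib, ite_mul, one_mul, zero_mul, neg_mul]
    rw [Finset.sum_ite_eq Finset.univ m (fun r => gmat (M + 1) β h Ek r n)]
    simp only [Finset.mem_univ, if_true]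
    rcases Fin.eq_zero_or_eq_succ m with rfl | ⟨i, rfl⟩
    · -- m = 0
      have hsum0 : (∑ r : Fin (M + 1),
          if (r : ℕ) + 1 = ((0 : Fin (M + 1)) : ℕ) then -(c * gmat (M + 1) β h Ek r n) else 0)
          = 0 := by
        apply Finset.sum_eq_zero
        intro r _
        rw [if_neg (by simp)]
      have hw0 : w 0 = 1 := by simp only [hw, if_pos rfl]
      rw [hsum0, add_zero, hw0, one_mul, hg]
      by_cases hn0 : (0 : Fin (M + 1)) = n
      · subst hn0
        have hvn : v 0 = ((-cp * Real.exp (-((((0 : Fin (M + 1)) : ℕ) : ℝ) / h * Ek)) : ℝ) : ℂ) :=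
          rfl
        rw [if_pos rfl, hvn]
        simp only [Fin.val_zero, Nat.cast_zero, sub_self, zero_div, zero_mul, neg_zero,
          Real.exp_zero, one_mul, mul_one, le_refl, if_pos]
        have : a = 1 + -cp := by linarith
        exact_mod_cast congrArg (fun x : ℝ => (x : ℂ)) this
      · have hvn : v n = ((-cp * Real.exp (-(((n : ℕ) : ℝ) / h * Ek)) : ℝ) : ℂ) := rfl
        rw [if_neg hn0, hvn, zero_add]
        refine congrArg Complex.ofReal ?_
        have hn0' : ¬ ((n : ℕ) ≤ ((0 : Fin (M + 1)) : ℕ)) := by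
          simp only [Fin.val_zero, Nat.le_zero]
          intro hc'
          exact hn0 ((Fin.ext (by simp [hc'])).symm : (0 : Fin (M + 1)) = n)
        rw [if_neg hn0']
        simp only [Fin.val_zero, Nat.cast_zero]
        rw [show ((0 : ℝ) - ((n : ℕ) : ℝ)) / h * Ek = -(((n : ℕ) : ℝ) / h * Ek) by ring]
        ring
    · -- m = i.succ
      have hsucc : (∑ r : Fin (M + 1),
          if (r : ℕ) + 1 = ((i.succ : Fin (M + 1)) : ℕ) then -(c * gmat (M + 1) β h Ek r n) else 0)
          = -(c * gmat (M + 1) β h Ek i.castSucc n) := by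
        rw [Finset.sum_eq_single i.castSucc]
        · rw [if_pos (by simp)]
        · intro r _ hr
          rw [if_neg]
          intro hcon
          apply hr
          apply Fin.ext
          simp only [Fin.coe_castSucc]
          simp only [Fin.val_succ] at hcon
          omega
        · intro hmem; exact absurd (Finset.mem_univ _) hmem
      have hwm : w i.succ = 0 := by simp only [hw, if_neg (Fin.succ_ne_zero i)]
      rw [hsucc, hwm, zero_mul, add_zero, hg, hg, hc, ← Complex.ofReal_mul, ← Complex.ofReal_neg,
        ← Complex.ofReal_add]
      have hcomb : Real.exp (Ek / h) * Real.exp ((((i : ℕ) : ℝ) - ((n : ℕ) : ℝ)) / h * Ek)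
          = Real.exp (((((i : ℕ) : ℝ) + 1) - ((n : ℕ) : ℝ)) / h * Ek) := by
        rw [← Real.exp_add]
        congr 1
        field_simp
        ring
      rcases Nat.lt_trichotomy (n : ℕ) ((i.succ : Fin (M + 1)) : ℕ) with hlt | heq | hgt
      · have hne : ¬ (i.succ = n) := by intro hc'; rw [hc'] at hlt; omega
        have hle1 : (n : ℕ) ≤ ((i.succ : Fin (M + 1)) : ℕ) := Nat.le_of_lt hlt
        have hle2 : (n : ℕ) ≤ ((i.castSucc : Fin (M + 1)) : ℕ) := by
          simp only [Fin.coe_castSucc]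
          simp only [Fin.val_succ] at hlt
          omega
        rw [if_neg hne, Complex.ofReal_eq_zero, if_pos hle1, if_pos hle2]
        simp only [Fin.val_succ, Fin.coe_castSucc]
        push_cast
        rw [← hcomb]
        ring
      · have heq' : i.succ = n := Fin.ext heq.symm
        rw [if_pos heq', Complex.ofReal_eq_one]
        simp only [Fin.val_succ] at heq
        have hle1 : (n : ℕ) ≤ ((i.succ : Fin (M + 1)) : ℕ) := by
          simp only [Fin.val_succ]; omega
        have hle2 : ¬ ((n : ℕ) ≤ ((i.castSucc : Fin (M + 1)) : ℕ)) := by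
          simp only [Fin.coe_castSucc]; omega
        rw [if_pos hle1, if_neg hle2]
        simp only [Fin.val_succ, Fin.coe_castSucc]
        have hn' : ((n : ℕ) : ℝ) = ((i : ℕ) : ℝ) + 1 := by exact_mod_cast congrArg Nat.cast heq
        have e1 : Real.exp (((((i : ℕ) : ℝ) + 1) - ((n : ℕ) : ℝ)) / h * Ek) = 1 := by
          rw [show ((((i : ℕ) : ℝ) + 1) - ((n : ℕ) : ℝ)) / h * Ek = 0 by rw [hn']; ring]
          exact Real.exp_zero
        have e2 : Real.exp (Ek / h) * Real.exp ((((i : ℕ) : ℝ) - ((n : ℕ) : ℝ)) / h * Ek) = 1 := by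
          rw [← Real.exp_add]
          rw [show Ek / h + (((i : ℕ) : ℝ) - ((n : ℕ) : ℝ)) / h * Ek = 0 by
            rw [hn']; field_simp; ring]
          exact Real.exp_zero
        push_cast
        push_cast at e1 e2
        linear_combination e1 * a + cp * e2 + hac
      · have hne : ¬ (i.succ = n) := by intro hc'; rw [hc'] at hgt; omega
        have hle1 : ¬ ((n : ℕ) ≤ ((i.succ : Fin (M + 1)) : ℕ)) := by omega
        have hle2 : ¬ ((n : ℕ) ≤ ((i.castSucc : Fin (M + 1)) : ℕ)) := by
          simp only [Fin.coe_castSucc]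
          simp only [Fin.val_succ] at hgt
          omega
        rw [if_neg hne, Complex.ofReal_eq_zero, if_neg hle1, if_neg hle2]
        simp only [Fin.val_succ, Fin.coe_castSucc]
        push_cast
        rw [← hcomb]
        ring
  have hdet : Emat.det * (gmat (M + 1) β h Ek).det = 1 + dotProduct v w := by
    rw [← Matrix.det_mul, key, Matrix.det_one_add_replicateCol_mul_replicateRow]
  rw [hdetE, one_mul] at hdet
  rw [hdet]
  have hvw : dotProduct v w = ((-cp : ℝ) : ℂ) := by
    rw [dotProduct]
    simp only [hw, mul_ite, mul_one, mul_zero]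
    rw [Finset.sum_ite_eq' Finset.univ (0 : Fin (M + 1)) v]
    simp [hv]
  rw [hvw]
  have hac' : ((a : ℝ) : ℂ) + ((cp : ℝ) : ℂ) = 1 := by
    exact_mod_cast congrArg (fun x : ℝ => (x : ℂ)) hac
  push_cast at hac' ⊢
  linear_combination -hac'


/-- Fourier synthesis matrix. -/
noncomputable def Amat (M : ℕ) :
    Matrix ((Fin d → ZMod L) × Bool × Fin M) ((Fin d → ZMod L) × Bool × Fin M) ℂ :=
  fun p q => if p.2 = q.2 then (Complex.exp (Complex.I * ((phase d L q.1 p.1 : ℝ) : ℂ)))⁻¹ else 0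

/-- Fourier analysis matrix. -/
noncomputable def Bmat (M : ℕ) :
    Matrix ((Fin d → ZMod L) × Bool × Fin M) ((Fin d → ZMod L) × Bool × Fin M) ℂ :=
  fun p q => if p.2 = q.2 then
    (1 / (L : ℂ) ^ d) * Complex.exp (Complex.I * ((phase d L p.1 q.1 : ℝ) : ℂ)) else 0

/-- Block diagonal middle matrix. -/
noncomputable def Dmat (E : (Fin d → ZMod L) → ℝ) (β h : ℝ) (M : ℕ) :
    Matrix ((Fin d → ZMod L) × Bool × Fin M) ((Fin d → ZMod L) × Bool × Fin M) ℂ :=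
  fun p q => if p.1 = q.1 ∧ p.2.1 = q.2.1 then gmat M β h (E p.1) p.2.2 q.2.2 else 0

lemma Bmat_mul_Amat (M : ℕ) : Bmat L d M * Amat L d M = 1 := by
  ext p q
  rw [Matrix.mul_apply, Fintype.sum_prod_type]
  have hin : ∀ y : Fin d → ZMod L,
      (∑ w : Bool × Fin M, Bmat L d M p (y, w) * Amat L d M (y, w) q)
        = if p.2 = q.2 then
            (1 / (L : ℂ) ^ d) * (Complex.exp (Complex.I * ((phase d L p.1 y : ℝ) : ℂ))
              * (Complex.exp (Complex.I * ((phase d L q.1 y : ℝ) : ℂ)))⁻¹) else 0 := by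
    intro y
    by_cases hpq : p.2 = q.2
    · rw [if_pos hpq, Finset.sum_eq_single q.2]
      · simp only [Bmat, Amat, if_pos hpq, eq_self_iff_true, if_true]
        ring
      · intro w _ hw
        rw [Amat]
        simp only
        rw [if_neg hw, mul_zero]
      · intro hmem; exact absurd (Finset.mem_univ _) hmem
    · rw [if_neg hpq]
      apply Finset.sum_eq_zero
      intro w _
      by_cases h1 : p.2 = w
      · rw [Amat]
        simp only
        rw [if_neg (fun hc => hpq (h1.trans hc)), mul_zero]
      · rw [Bmat]
        simp only
        rw [if_neg h1, zero_mul]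
  simp only [hin]
  by_cases hpq : p.2 = q.2
  · simp only [if_pos hpq]
    rw [← Finset.mul_sum, ortho L d p.1 q.1]
    have hLd : ((L : ℂ)) ^ d ≠ 0 := pow_ne_zero d (hLC L)
    by_cases h1 : p.1 = q.1
    · have hpq' : p = q := Prod.ext h1 hpq
      rw [if_pos h1, hpq', Matrix.one_apply_eq]
      field_simp
    · have hpq' : p ≠ q := fun hc => h1 (congrArg Prod.fst hc)
      rw [if_neg h1, Matrix.one_apply_ne hpq', mul_zero]
  · have hpq' : p ≠ q := fun hc => hpq (congrArg Prod.snd hc)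
    rw [Matrix.one_apply_ne hpq']
    apply Finset.sum_eq_zero
    intro y _
    rw [if_neg hpq]

lemma decomp (t t' μ β h : ℝ) (M : ℕ) :
    (Matrix.of fun p q : (Fin d → ZMod L) × Bool × Fin M =>
        Cov d L t t' μ β p.1 p.2.1 ((p.2.2 : ℝ) / h) q.1 q.2.1 ((q.2.2 : ℝ) / h))
      = Amat L d M * Dmat L d (fun k => disp d L t t' μ k) β h M * Bmat L d M := by
  ext p q
  have hAD : ∀ s : (Fin d → ZMod L) × Bool × Fin M,
      (Amat L d M * Dmat L d (fun k => disp d L t t' μ k) β h M) p s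
        = if p.2.1 = s.2.1 then
            (Complex.exp (Complex.I * ((phase d L s.1 p.1 : ℝ) : ℂ)))⁻¹
              * gmat M β h (disp d L t t' μ s.1) p.2.2 s.2.2 else 0 := by
    intro s
    rw [Matrix.mul_apply, Finset.sum_eq_single ((s.1, p.2) : (Fin d → ZMod L) × Bool × Fin M)]
    · simp only [Amat, Dmat, eq_self_iff_true, if_true, true_and]
      rw [mul_ite, mul_zero]
    · intro r _ hr
      by_cases h2 : p.2 = r.2
      · have h1 : ¬ (r.1 = s.1) := by
          intro hc
          exact hr (Prod.ext hc h2.symm)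
        simp only [Dmat]
        rw [if_neg (fun hx : _ ∧ _ => h1 hx.1), mul_zero]
      · simp only [Amat]
        rw [if_neg h2, zero_mul]
    · intro hmem; exact absurd (Finset.mem_univ _) hmem
  rw [Matrix.mul_apply]
  simp only [hAD]
  rw [Fintype.sum_prod_type]
  have hin : ∀ k : Fin d → ZMod L,
      (∑ w : Bool × Fin M,
        (if p.2.1 = w.1 then
            (Complex.exp (Complex.I * ((phase d L k p.1 : ℝ) : ℂ)))⁻¹
              * gmat M β h (disp d L t t' μ k) p.2.2 w.2 else 0) * Bmat L d M (k, w) q)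
        = if p.2.1 = q.2.1 then
            ((Complex.exp (Complex.I * ((phase d L k p.1 : ℝ) : ℂ)))⁻¹
               * gmat M β h (disp d L t t' μ k) p.2.2 q.2.2)
              * ((1 / (L : ℂ) ^ d) * Complex.exp (Complex.I * ((phase d L k q.1 : ℝ) : ℂ)))
          else 0 := by
    intro k
    rw [Finset.sum_eq_single q.2]
    · simp only [Bmat, eq_self_iff_true, if_true]
      rw [ite_mul, zero_mul]
    · intro w _ hw
      rw [Bmat]
      simp only
      rw [if_neg hw, mul_zero]
    · intro hmem; exact absurd (Finset.mem_univ _) hmem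
  simp only [hin]
  rw [Matrix.of_apply, Cov]
  by_cases hc : p.2.1 = q.2.1
  · simp only [if_pos hc]
    rw [Finset.mul_sum]
    refine Finset.sum_congr rfl fun k _ => ?_
    rw [exp_phase_sub L d k p.1 q.1]
    simp only [gmat]
    ring
  · simp only [if_neg hc]
    simp

lemma det_cov_matrix (t t' μ β h : ℝ) (M : ℕ) (hM : 0 < M) (hh : 0 < h) :
    (Matrix.of fun p q : (Fin d → ZMod L) × Bool × Fin M =>
        Cov d L t t' μ β p.1 p.2.1 ((p.2.2 : ℝ) / h) q.1 q.2.1 ((q.2.2 : ℝ) / h)).det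
      = ∏ k : Fin d → ZMod L,
          ((1 / (1 + Real.exp (β * disp d L t t' μ k)) : ℝ) : ℂ) ^ 2 := by
  rw [decomp L d t t' μ β h M]
  rw [Matrix.det_mul, Matrix.det_mul]
  have hBA : (Bmat L d M).det * (Amat L d M).det = 1 := by
    rw [← Matrix.det_mul, Bmat_mul_Amat, Matrix.det_one]
  have hD : (Dmat L d (fun k => disp d L t t' μ k) β h M).det
      = ∏ k : Fin d → ZMod L,
          ((1 / (1 + Real.exp (β * disp d L t t' μ k)) : ℝ) : ℂ) ^ 2 := by
    have heq : Dmat L d (fun k => disp d L t t' μ k) β h M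
        = (Matrix.blockDiagonal
            (fun w : (Fin d → ZMod L) × Bool => gmat M β h (disp d L t t' μ w.1))).submatrix
          (⇑(⟨fun p => (p.2.2, (p.1, p.2.1)), fun q => (q.2.1, q.2.2, q.1),
              fun p => rfl, fun q => rfl⟩ :
            ((Fin d → ZMod L) × Bool × Fin M) ≃ (Fin M × ((Fin d → ZMod L) × Bool))))
          (⇑(⟨fun p => (p.2.2, (p.1, p.2.1)), fun q => (q.2.1, q.2.2, q.1),
              fun p => rfl, fun q => rfl⟩ :
            ((Fin d → ZMod L) × Bool × Fin M) ≃ (Fin M × ((Fin d → ZMod L) × Bool)))) := by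
      ext p q
      simp only [Dmat, Matrix.submatrix_apply, Matrix.blockDiagonal_apply, Equiv.coe_fn_mk]
      by_cases hc : p.1 = q.1 ∧ p.2.1 = q.2.1
      · rw [if_pos hc, if_pos (Prod.ext hc.1 hc.2 :
          ((p.1, p.2.1) : (Fin d → ZMod L) × Bool) = (q.1, q.2.1)), hc.1]
      · rw [if_neg hc, if_neg (fun hx : ((p.1, p.2.1) : (Fin d → ZMod L) × Bool) = (q.1, q.2.1) =>
          hc (Prod.ext_iff.mp hx))]
    rw [heq, Matrix.det_submatrix_equiv_self, Matrix.det_blockDiagonal]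
    rw [Fintype.prod_prod_type]
    refine Finset.prod_congr rfl fun k _ => ?_
    dsimp only
    rw [Finset.prod_const, det_gmat M hM β h (disp d L t t' μ k) hh]
    simp
  rw [hD]
  linear_combination (∏ k : Fin d → ZMod L,
    ((1 / (1 + Real.exp (β * disp d L t t' μ k)) : ℝ) : ℂ) ^ 2) * hBA


end CovDet

/-- The determinant of the covariance matrix `C_h` (indexed by `Γ × {↑,↓} × [0,β)_h`,
`βh = 2N`) equals `1/∏_{k∈Γ*}(1 + e^{βE_k})²`; in particular it is positive and
independent of `h`. -/
theorem covariance_determinant (d L : ℕ) [NeZero L] (t t' μ β : ℝ) (hβ : 0 < β)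
    (h : ℝ) (hh : 0 < h) (N : ℕ) (hM : β * h = 2 * N) :
    Matrix.det (Matrix.of
        fun p q : (Fin d → ZMod L) × Bool × Fin (2 * N) =>
          Cov d L t t' μ β p.1 p.2.1 ((p.2.2 : ℝ) / h) q.1 q.2.1 ((q.2.2 : ℝ) / h))
      = Complex.ofReal
          (1 / ∏ k : Fin d → ZMod L, (1 + Real.exp (β * disp d L t t' μ k)) ^ 2) ∧
    0 < 1 / ∏ k : Fin d → ZMod L, (1 + Real.exp (β * disp d L t t' μ k)) ^ 2 := by
  have hN : 0 < 2 * N := by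
    have h2 : (0 : ℝ) < 2 * N := hM ▸ mul_pos hβ hh
    have hN0 : N ≠ 0 := by
      rintro rfl
      norm_num at h2
    omega
  constructor
  · rw [CovDet.det_cov_matrix L d t t' μ β h (2 * N) hN hh]
    have hreal : (∏ k : Fin d → ZMod L, (1 / (1 + Real.exp (β * disp d L t t' μ k))) ^ 2)
        = 1 / ∏ k : Fin d → ZMod L, (1 + Real.exp (β * disp d L t t' μ k)) ^ 2 := by
      simp only [div_pow, one_pow]
      rw [Finset.prod_div_distrib]
      simp
    rw [← hreal]
    push_cast
    rfl
  · apply div_pos one_pos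
    apply Finset.prod_pos
    intro k _
    positivity
end
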